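/- arXiv:2003.10721 — 3 statements merged into one kernel-verified Lean document; each statement's English description precedes it below -/
import Mathlib

section
/- Let B = [[5,2],[3,1]] and B₁ = [[1,1],[1,0]], and define D_n = tr(B₁ B^{n+1})² − 4(−1)^n. Then D_n mod 5 equals (−1)^k if n = 5k, 2(−1)^k if n = 5k+2, −2(−1)^k if n = 5k+3, and 0 if n ≡ 1 or 4 mod 5; furthermore D_n is odd if n is odd and even if n is even. -/
set_option maxRecDepth 4000

open Matrix

/-- `D n = tr(B₁ B^(n+1))² − 4(−1)^n` for `B = [[5,2],[3,1]]`, `B₁ = [[1,1],[1,0]]`. -/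
def Dseq (n : ℕ) : ℤ :=
  (Matrix.trace (!![(1 : ℤ), 1; 1, 0] * (!![(5 : ℤ), 2; 3, 1]) ^ (n + 1))) ^ 2
    - 4 * (-1) ^ n

section aux

private def cast5 : Matrix (Fin 2) (Fin 2) ℤ →+* Matrix (Fin 2) (Fin 2) (ZMod 5) :=
  (Int.castRingHom (ZMod 5)).mapMatrix

private def cast2 : Matrix (Fin 2) (Fin 2) ℤ →+* Matrix (Fin 2) (Fin 2) (ZMod 2) :=
  (Int.castRingHom (ZMod 2)).mapMatrix

private lemma Dseq_cast5 (n : ℕ) : ((Dseq n : ℤ) : ZMod 5) =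
    (Matrix.trace (!![(1 : ZMod 5), 1; 1, 0] * (!![(0 : ZMod 5), 2; 3, 1]) ^ (n + 1))) ^ 2
      - 4 * (-1) ^ n := by
  have h1 : cast5 !![(1 : ℤ), 1; 1, 0] = !![(1 : ZMod 5), 1; 1, 0] := by
    ext i j; fin_cases i <;> fin_cases j <;> simp [cast5]
  have h2 : cast5 !![(5 : ℤ), 2; 3, 1] = !![(0 : ZMod 5), 2; 3, 1] := by
    ext i j; fin_cases i <;> fin_cases j <;> simp [cast5] <;> decide
  have htr : ∀ A : Matrix (Fin 2) (Fin 2) ℤ,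
      ((Matrix.trace A : ℤ) : ZMod 5) = Matrix.trace (cast5 A) := by
    intro A
    simp [cast5, Matrix.trace, RingHom.mapMatrix_apply, Matrix.diag]
  unfold Dseq
  push_cast
  rw [htr, _root_.map_mul, map_pow, h1, h2]

private lemma Dseq_cast2 (n : ℕ) : ((Dseq n : ℤ) : ZMod 2) =
    (Matrix.trace (!![(1 : ZMod 2), 1; 1, 0] * (!![(1 : ZMod 2), 0; 1, 1]) ^ (n + 1))) ^ 2
      - 4 * (-1) ^ n := by
  have h1 : cast2 !![(1 : ℤ), 1; 1, 0] = !![(1 : ZMod 2), 1; 1, 0] := by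
    ext i j; fin_cases i <;> fin_cases j <;> simp [cast2]
  have h2 : cast2 !![(5 : ℤ), 2; 3, 1] = !![(1 : ZMod 2), 0; 1, 1] := by
    ext i j; fin_cases i <;> fin_cases j <;> simp [cast2] <;> decide
  have htr : ∀ A : Matrix (Fin 2) (Fin 2) ℤ,
      ((Matrix.trace A : ℤ) : ZMod 2) = Matrix.trace (cast2 A) := by
    intro A
    simp [cast2, Matrix.trace, RingHom.mapMatrix_apply, Matrix.diag]
  unfold Dseq
  push_cast
  rw [htr, _root_.map_mul, map_pow, h1, h2]

private lemma M5_pow20 : (!![(0 : ZMod 5), 2; 3, 1]) ^ 20 = 1 := by decide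

private lemma M2_pow2 : (!![(1 : ZMod 2), 0; 1, 1]) ^ 2 = 1 := by decide

private lemma Dseq_period5 (n : ℕ) : ((Dseq (n + 20) : ℤ) : ZMod 5) = ((Dseq n : ℤ) : ZMod 5) := by
  rw [Dseq_cast5, Dseq_cast5]
  have : (!![(0 : ZMod 5), 2; 3, 1]) ^ (n + 20 + 1)
      = (!![(0 : ZMod 5), 2; 3, 1]) ^ (n + 1) := by
    rw [show n + 20 + 1 = (n + 1) + 20 by ring, pow_add, M5_pow20, mul_one]
  rw [this]
  norm_num [pow_add]

private lemma Dseq_period2 (n : ℕ) : ((Dseq (n + 2) : ℤ) : ZMod 2) = ((Dseq n : ℤ) : ZMod 2) := by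
  rw [Dseq_cast2, Dseq_cast2]
  have : (!![(1 : ZMod 2), 0; 1, 1]) ^ (n + 2 + 1)
      = (!![(1 : ZMod 2), 0; 1, 1]) ^ (n + 1) := by
    rw [show n + 2 + 1 = (n + 1) + 2 by ring, pow_add, M2_pow2, mul_one]
  rw [this]
  norm_num [pow_add]

private lemma caseA : ∀ k : ℕ, ((Dseq (5 * k) : ℤ) : ZMod 5) = (-1 : ZMod 5) ^ k := by
  intro k
  induction k using Nat.strong_induction_on with
  | _ k ih =>
    match k with
    | 0 => rw [Dseq_cast5]; decide
    | 1 => rw [Dseq_cast5]; decide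
    | 2 => rw [Dseq_cast5]; decide
    | 3 => rw [Dseq_cast5]; decide
    | (k + 4) =>
      rw [show 5 * (k + 4) = 5 * k + 20 by ring, Dseq_period5, ih k (by omega),
        show k + 4 = k + 2 * 2 by ring, pow_add]
      norm_num

private lemma caseB : ∀ k : ℕ, ((Dseq (5 * k + 2) : ℤ) : ZMod 5) = 2 * (-1 : ZMod 5) ^ k := by
  intro k
  induction k using Nat.strong_induction_on with
  | _ k ih =>
    match k with
    | 0 => rw [Dseq_cast5]; decide
    | 1 => rw [Dseq_cast5]; decide
    | 2 => rw [Dseq_cast5]; decide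
    | 3 => rw [Dseq_cast5]; decide
    | (k + 4) =>
      rw [show 5 * (k + 4) + 2 = (5 * k + 2) + 20 by ring, Dseq_period5, ih k (by omega),
        show k + 4 = k + 2 * 2 by ring, pow_add]
      norm_num

private lemma caseC : ∀ k : ℕ, ((Dseq (5 * k + 3) : ℤ) : ZMod 5) = -2 * (-1 : ZMod 5) ^ k := by
  intro k
  induction k using Nat.strong_induction_on with
  | _ k ih =>
    match k with
    | 0 => rw [Dseq_cast5]; decide
    | 1 => rw [Dseq_cast5]; decide
    | 2 => rw [Dseq_cast5]; decide
    | 3 => rw [Dseq_cast5]; decide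
    | (k + 4) =>
      rw [show 5 * (k + 4) + 3 = (5 * k + 3) + 20 by ring, Dseq_period5, ih k (by omega),
        show k + 4 = k + 2 * 2 by ring, pow_add]
      norm_num

private lemma caseD1 : ∀ k : ℕ, ((Dseq (5 * k + 1) : ℤ) : ZMod 5) = 0 := by
  intro k
  induction k using Nat.strong_induction_on with
  | _ k ih =>
    match k with
    | 0 => rw [Dseq_cast5]; decide
    | 1 => rw [Dseq_cast5]; decide
    | 2 => rw [Dseq_cast5]; decide
    | 3 => rw [Dseq_cast5]; decide
    | (k + 4) =>
      rw [show 5 * (k + 4) + 1 = (5 * k + 1) + 20 by ring, Dseq_period5, ih k (by omega)]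

private lemma caseD4 : ∀ k : ℕ, ((Dseq (5 * k + 4) : ℤ) : ZMod 5) = 0 := by
  intro k
  induction k using Nat.strong_induction_on with
  | _ k ih =>
    match k with
    | 0 => rw [Dseq_cast5]; decide
    | 1 => rw [Dseq_cast5]; decide
    | 2 => rw [Dseq_cast5]; decide
    | 3 => rw [Dseq_cast5]; decide
    | (k + 4) =>
      rw [show 5 * (k + 4) + 4 = (5 * k + 4) + 20 by ring, Dseq_period5, ih k (by omega)]

private lemma parity : ∀ n : ℕ, ((Dseq n : ℤ) : ZMod 2) = (n : ZMod 2) := by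
  intro n
  induction n using Nat.strong_induction_on with
  | _ n ih =>
    match n with
    | 0 => rw [Dseq_cast2]; decide
    | 1 => rw [Dseq_cast2]; decide
    | (n + 2) =>
      rw [Dseq_period2, ih n (by omega)]
      push_cast
      simp [show (2 : ZMod 2) = 0 from by decide]

end aux

theorem stmt_17 (n : ℕ) :
    (∀ k : ℕ, n = 5 * k → Dseq n ≡ (-1) ^ k [ZMOD 5]) ∧
    (∀ k : ℕ, n = 5 * k + 2 → Dseq n ≡ 2 * (-1) ^ k [ZMOD 5]) ∧
    (∀ k : ℕ, n = 5 * k + 3 → Dseq n ≡ -2 * (-1) ^ k [ZMOD 5]) ∧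
    (n % 5 = 1 ∨ n % 5 = 4 → Dseq n ≡ 0 [ZMOD 5]) ∧
    (Odd n → Odd (Dseq n)) ∧ (Even n → Even (Dseq n)) := by
  refine ⟨?_, ?_, ?_, ?_, ?_, ?_⟩
  · intro k hk
    apply (ZMod.intCast_eq_intCast_iff _ _ 5).mp
    rw [hk, caseA]
    push_cast; ring
  · intro k hk
    apply (ZMod.intCast_eq_intCast_iff _ _ 5).mp
    rw [hk, caseB]
    push_cast; ring
  · intro k hk
    apply (ZMod.intCast_eq_intCast_iff _ _ 5).mp
    rw [hk, caseC]
    push_cast; ring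
  · intro h
    apply (ZMod.intCast_eq_intCast_iff _ _ 5).mp
    rcases h with h | h
    · obtain ⟨k, hk⟩ : ∃ k, n = 5 * k + 1 := ⟨n / 5, by omega⟩
      rw [hk, caseD1]; norm_num
    · obtain ⟨k, hk⟩ : ∃ k, n = 5 * k + 4 := ⟨n / 5, by omega⟩
      rw [hk, caseD4]; norm_num
  · intro hn
    have h := parity n
    have hc : ((n : ℕ) : ZMod 2) = 1 := by
      rw [← ZMod.natCast_mod, Nat.odd_iff.mp hn]; simp
    rw [← Int.not_even_iff_odd]
    intro he
    have h0 : ((Dseq n : ℤ) : ZMod 2) = 0 := by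
      rw [ZMod.intCast_zmod_eq_zero_iff_dvd]
      exact_mod_cast (even_iff_two_dvd).mp he
    rw [h0, hc] at h
    exact zero_ne_one h
  · intro hn
    have h := parity n
    have hc : ((n : ℕ) : ZMod 2) = 0 := by
      rw [← ZMod.natCast_mod, Nat.even_iff.mp hn]; simp
    rw [even_iff_two_dvd]
    have := (ZMod.intCast_zmod_eq_zero_iff_dvd (Dseq n) 2).mp (by rw [h, hc])
    exact_mod_cast this
end

section
/- Let B = [[5,2],[3,1]], B₁ = [[1,1],[1,0]], and D_n = tr(B₁ B^{n+1})² − 4(−1)^n. If n is odd or n ≢ ±1 (mod 5), then D_n is not of the form 10b² for any integer b; consequently √D_n ∉ ℚ(√10). -/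
open Matrix

def tseq : ℕ → ℤ
  | 0 => 10
  | 1 => 61
  | (n+2) => 6 * tseq (n+1) + tseq n

lemma Bsq : (!![(5:ℤ), 2; 3, 1]) ^ 2 = 6 • (!![(5:ℤ), 2; 3, 1]) + 1 := by
  norm_num [pow_two, Matrix.mul_fin_two, Matrix.smul_of, Matrix.one_fin_two]
  decide

lemma trace_eq : ∀ n, Matrix.trace (!![(1 : ℤ), 1; 1, 0] * (!![(5 : ℤ), 2; 3, 1]) ^ (n + 1)) = tseq n := by
  have key : ∀ n, Matrix.trace (!![(1 : ℤ), 1; 1, 0] * (!![(5 : ℤ), 2; 3, 1]) ^ (n + 1)) = tseq n ∧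
      Matrix.trace (!![(1 : ℤ), 1; 1, 0] * (!![(5 : ℤ), 2; 3, 1]) ^ (n + 2)) = tseq (n+1) := by
    intro n
    induction n with
    | zero =>
      constructor <;>
      · norm_num [pow_succ, Matrix.mul_fin_two, Matrix.trace_fin_two_of, tseq]
    | succ k ih =>
      refine ⟨ih.2, ?_⟩
      have h : (!![(5 : ℤ), 2; 3, 1]) ^ (k + 3) = 6 • (!![(5 : ℤ), 2; 3, 1]) ^ (k+2) + (!![(5 : ℤ), 2; 3, 1]) ^ (k+1) := by
        have : (k + 3) = (k+1) + 2 := by ring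
        rw [this, pow_add, Bsq, mul_add, mul_one, mul_smul_comm, ← pow_succ]
      rw [h, mul_add, mul_smul_comm, Matrix.trace_add, Matrix.trace_smul, ih.1, ih.2,
        tseq]
      push_cast; ring
  exact fun n => (key n).1

lemma tseq_mod_period : ∀ n, ((tseq (n + 20) : ZMod 10)) = (tseq n : ZMod 10) := by
  have key : ∀ n, ((tseq (n + 20) : ZMod 10)) = (tseq n : ZMod 10) ∧
      ((tseq (n + 21) : ZMod 10)) = (tseq (n+1) : ZMod 10) := by
    intro n
    induction n with
    | zero => constructor <;> · norm_num [tseq]; decide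
    | succ k ih =>
      refine ⟨ih.2, ?_⟩
      have h1 : k + 1 + 21 = (k + 20) + 2 := by ring
      have h2 : k + 1 + 1 = k + 2 := by ring
      rw [h1, h2, show tseq (k + 20 + 2) = 6 * tseq (k + 20 + 1) + tseq (k + 20) from rfl,
        show tseq (k + 2) = 6 * tseq (k + 1) + tseq k from rfl]
      push_cast
      rw [show k + 20 + 1 = (k + 1) + 20 from rfl, ih.1]
      rw [show k + 1 + 20 = k + 21 from rfl, ih.2]
  exact fun n => (key n).1

lemma tseq_mod : ∀ n, ((tseq n : ZMod 10)) = (tseq (n % 20) : ZMod 10) := by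
  have key : ∀ q r, ((tseq (20 * q + r) : ZMod 10)) = (tseq r : ZMod 10) := by
    intro q
    induction q with
    | zero => intro r; norm_num
    | succ k ih =>
      intro r
      have : 20 * (k+1) + r = (20 * k + r) + 20 := by ring
      rw [this, tseq_mod_period, ih]
  intro n
  conv_lhs => rw [show n = 20 * (n / 20) + n % 20 from (Nat.div_add_mod n 20).symm]
  rw [key]


lemma Dseq_eq (n : ℕ) : Dseq n = (tseq n) ^ 2 - 4 * (-1) ^ n := by
  rw [Dseq, trace_eq]

lemma neg_one_pow_mod (n : ℕ) : ((-1 : ZMod 10)) ^ n = (-1) ^ (n % 20) := by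
  conv_lhs => rw [show n = 20 * (n / 20) + n % 20 from (Nat.div_add_mod n 20).symm]
  rw [pow_add, pow_mul]
  norm_num

lemma Dseq_mod (n : ℕ) (hn : Odd n ∨ (n % 5 ≠ 1 ∧ n % 5 ≠ 4)) :
    (Dseq n : ZMod 10) ≠ 0 := by
  rw [Dseq_eq]
  push_cast
  rw [tseq_mod, neg_one_pow_mod]
  have h2 : n % 2 = n % 20 % 2 := by omega
  have h5 : n % 5 = n % 20 % 5 := by omega
  rw [Nat.odd_iff, h2, h5] at hn
  have hr : n % 20 < 20 := Nat.mod_lt _ (by norm_num)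
  generalize hR : n % 20 = r at hn hr ⊢
  interval_cases r <;> revert hn <;> simp [tseq] <;> decide

lemma tseq_ge : ∀ n, 10 ≤ tseq n := by
  have key : ∀ n, 10 ≤ tseq n ∧ 10 ≤ tseq (n+1) := by
    intro n
    induction n with
    | zero => exact ⟨by norm_num [tseq], by norm_num [tseq]⟩
    | succ k ih =>
      refine ⟨ih.2, ?_⟩
      show 10 ≤ 6 * tseq (k+1) + tseq k
      nlinarith [ih.1, ih.2]
  exact fun n => (key n).1

lemma Dseq_pos (n : ℕ) : 0 < Dseq n := by
  rw [Dseq_eq]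
  have h := tseq_ge n
  rcases Nat.even_or_odd n with h2 | h2
  · rw [h2.neg_one_pow]; nlinarith
  · rw [h2.neg_one_pow]; nlinarith

lemma Dseq_not_square (n : ℕ) : ¬ IsSquare (Dseq n) := by
  rintro ⟨r, hr⟩
  rw [Dseq_eq] at hr
  have h := tseq_ge n
  have hr' : |r| * |r| = r * r := abs_mul_abs_self r
  have habs : 0 ≤ |r| := abs_nonneg r
  rcases Nat.even_or_odd n with h2 | h2
  · rw [h2.neg_one_pow] at hr
    -- r² = t² - 4, t ≥ 10 : t-1 < |r| < t impossible
    have h1 : |r| < tseq n := by nlinarith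
    have h2 : tseq n - 1 < |r| := by nlinarith
    omega
  · rw [h2.neg_one_pow] at hr
    have h1 : tseq n < |r| := by nlinarith
    have h2 : |r| < tseq n + 1 := by nlinarith
    omega

lemma irr10 : Irrational (Real.sqrt 10) := by
  have : ((10 : ℕ) : ℝ) = (10 : ℝ) := by norm_num
  rw [← this]
  rw [irrational_sqrt_natCast_iff]
  rintro ⟨r, hr⟩
  have : r ≤ 3 := by nlinarith
  interval_cases r <;> omega

theorem stmt_18 (n : ℕ) (hn : Odd n ∨ (n % 5 ≠ 1 ∧ n % 5 ≠ 4)) :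
    (∀ b : ℤ, Dseq n ≠ 10 * b ^ 2) ∧
    ¬∃ a b : ℚ, Real.sqrt (Dseq n) = (a : ℝ) + (b : ℝ) * Real.sqrt 10 := by
  have hmod := Dseq_mod n hn
  have hpart1 : ∀ b : ℤ, Dseq n ≠ 10 * b ^ 2 := by
    intro b hb
    apply hmod
    rw [hb]
    push_cast
    rw [show ((10 : ZMod 10)) = 0 from rfl]
    ring
  refine ⟨hpart1, ?_⟩
  rintro ⟨a, b, hab⟩
  have hpos := Dseq_pos n
  have hDnn : (0:ℝ) ≤ (Dseq n : ℝ) := by exact_mod_cast hpos.le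
  have hsq : ((Dseq n : ℝ)) = (a:ℝ)^2 + 10 * (b:ℝ)^2 + 2 * a * b * Real.sqrt 10 := by
    have h10 : Real.sqrt 10 * Real.sqrt 10 = 10 := Real.mul_self_sqrt (by norm_num)
    have hD := Real.mul_self_sqrt hDnn
    rw [hab] at hD
    linear_combination (-1) * hD + (b:ℝ)^2 * h10
  by_cases hb0 : b = 0
  · -- sqrt D rational, but D is not a square
    have hirr : Irrational (Real.sqrt (Dseq n)) :=
      (irrational_sqrt_intCast_iff).mpr ⟨Dseq_not_square n, hpos.le⟩
    subst hb0
    simp at hab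
    exact hirr ⟨a, hab.symm⟩
  by_cases ha0 : a = 0
  · -- D = 10 b², b rational
    subst ha0
    simp at hsq
    have hQ : (Dseq n : ℚ) = 10 * b ^ 2 := by exact_mod_cast hsq
    set q : ℚ := 10 * b with hq
    have hq2 : q ^ 2 = ((10 * Dseq n : ℤ) : ℚ) := by
      push_cast; rw [hq]; linear_combination (-10) * hQ
    have hden : q.den = 1 := by
      have h1 : (q ^ 2).den = 1 := by rw [hq2]; exact Rat.den_intCast _
      rw [Rat.den_pow, pow_two] at h1
      exact Nat.eq_one_of_mul_eq_one_right h1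
    obtain ⟨k, hk⟩ : ∃ k : ℤ, q = (k : ℚ) := ⟨q.num, (Rat.den_eq_one_iff q).mp hden |>.symm⟩
    have hk2 : k ^ 2 = 10 * Dseq n := by
      have := hq2; rw [hk] at this; exact_mod_cast this
    have h2 : (2:ℤ) ∣ k := by
      have : (2:ℤ) ∣ k ^ 2 := ⟨5 * Dseq n, by linarith⟩
      have h := Int.Prime.dvd_pow' (n := k) Nat.prime_two (by exact_mod_cast this)
      exact_mod_cast h
    have h5 : (5:ℤ) ∣ k := by
      have : (5:ℤ) ∣ k ^ 2 := ⟨2 * Dseq n, by linarith⟩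
      have h := Int.Prime.dvd_pow' (n := k) (by norm_num : Nat.Prime 5) (by exact_mod_cast this)
      exact_mod_cast h
    obtain ⟨m, hm⟩ : (10:ℤ) ∣ k := by omega
    apply hpart1 m
    have : (10*m)^2 = 10 * Dseq n := by rw [← hm]; exact hk2
    nlinarith [this]
  · -- a,b ≠ 0: sqrt 10 rational
    have hab2 : (2 * a * b : ℝ) ≠ 0 := by
      push_cast
      simp [ha0, hb0]
    have ha' : (a:ℝ) ≠ 0 := by exact_mod_cast ha0
    have hb' : (b:ℝ) ≠ 0 := by exact_mod_cast hb0
    have : Real.sqrt 10 = (((Dseq n : ℚ) - a^2 - 10*b^2) / (2*a*b) : ℚ) := by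
      push_cast
      field_simp
      linear_combination -hsq
    exact irr10 ⟨_, this.symm⟩
end

section
/- Suppose a double sequence γ⁽ⁿ⁾(m) of reals satisfies γ⁽ⁿ⁾(m) = 2 + τ⁽ⁿ⁾(m)·γ⁽ⁿ⁾(m−1) for m ≥ 1 where 0 < τ⁽ⁿ⁾(m) < 9/50 for all n, m, and γ⁽ⁿ⁾(0) is bounded by 4. If τ⁽ⁿ⁾(m) → τ(m) uniformly in m as n → ∞ and γ⁽ⁿ⁾(0) converges, and τ(m) → τ as m → ∞ with 0 < τ < 1, then γ(m) := lim_n γ⁽ⁿ⁾(m) exists for each m (uniformly in m), γ(m) converges to γ = 2/(1−τ) as m → ∞, and γ⁽ⁿ⁾(n) → 2/(1−τ) as n → ∞. -/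
open Filter

theorem stmt_19 (γ τ : ℕ → ℕ → ℝ) (τlim : ℕ → ℝ) (τInf : ℝ)
    (hrec : ∀ n m, γ n (m + 1) = 2 + τ n (m + 1) * γ n m)
    (hτpos : ∀ n m, 0 < τ n m) (hτlt : ∀ n m, τ n m < 9 / 50)
    (hγ0 : ∀ n, |γ n 0| ≤ 4)
    (hτu : ∀ ε > (0 : ℝ), ∃ N, ∀ n ≥ N, ∀ m, |τ n m - τlim m| < ε)
    (hγ0conv : ∃ L, Tendsto (fun n => γ n 0) atTop (nhds L))
    (hτInf : Tendsto τlim atTop (nhds τInf))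
    (hτInfpos : 0 < τInf) (hτInflt : τInf < 1) :
    ∃ γlim : ℕ → ℝ,
      (∀ ε > (0 : ℝ), ∃ N, ∀ n ≥ N, ∀ m, |γ n m - γlim m| < ε) ∧
      Tendsto γlim atTop (nhds (2 / (1 - τInf))) ∧
      Tendsto (fun n => γ n n) atTop (nhds (2 / (1 - τInf))) := by
  obtain ⟨L, hL⟩ := hγ0conv
  -- pointwise convergence of τ n m to τlim m
  have hτpt : ∀ m, Tendsto (fun n => τ n m) atTop (nhds (τlim m)) := by
    intro m
    rw [Metric.tendsto_atTop]
    intro ε hε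
    obtain ⟨N, hN⟩ := hτu ε hε
    exact ⟨N, fun n hn => by simpa [Real.dist_eq] using hN n hn m⟩
  have hτlim1 : ∀ m, τlim m ≤ 9 / 50 := fun m =>
    le_of_tendsto' (hτpt m) (fun n => (hτlt n m).le)
  have hτlim0 : ∀ m, 0 ≤ τlim m := fun m =>
    ge_of_tendsto' (hτpt m) (fun n => (hτpos n m).le)
  have hτI1 : τInf ≤ 9 / 50 := le_of_tendsto' hτInf hτlim1
  -- bound on γ
  have hγb : ∀ n m, |γ n m| ≤ 4 := by
    intro n m
    induction m with
    | zero => exact hγ0 n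
    | succ m ih =>
      rw [hrec n m]
      have h1 := (hτpos n (m + 1)).le
      have h2 := (hτlt n (m + 1)).le
      have hm1 : |τ n (m + 1) * γ n m| ≤ 9 / 50 * 4 := by
        rw [abs_mul, abs_of_nonneg h1]
        exact mul_le_mul h2 ih (abs_nonneg _) (by norm_num)
      calc |2 + τ n (m + 1) * γ n m| ≤ |(2 : ℝ)| + |τ n (m + 1) * γ n m| := abs_add_le _ _
        _ ≤ 4 := by rw [abs_two]; linarith
  have hL4 : |L| ≤ 4 := le_of_tendsto' hL.abs hγ0
  -- the limit sequence
  set glim : ℕ → ℝ := fun m => Nat.rec L (fun k ih => 2 + τlim (k + 1) * ih) m with hglimdef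
  have hg0 : glim 0 = L := rfl
  have hgs : ∀ m, glim (m + 1) = 2 + τlim (m + 1) * glim m := fun m => rfl
  have hgb : ∀ m, |glim m| ≤ 4 := by
    intro m
    induction m with
    | zero => exact hL4
    | succ m ih =>
      rw [hgs m]
      have hm1 : |τlim (m + 1) * glim m| ≤ 9 / 50 * 4 := by
        rw [abs_mul, abs_of_nonneg (hτlim0 (m + 1))]
        exact mul_le_mul (hτlim1 (m + 1)) ih (abs_nonneg _) (by norm_num)
      calc |2 + τlim (m + 1) * glim m| ≤ |(2 : ℝ)| + |τlim (m + 1) * glim m| := abs_add_le _ _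
        _ ≤ 4 := by rw [abs_two]; linarith
  set g : ℝ := 2 / (1 - τInf) with hgdef
  have h1τ : (0 : ℝ) < 1 - τInf := by linarith
  have hgfix : g = 2 + τInf * g := by
    rw [hgdef]
    field_simp
    ring
  have hgb3 : |g| ≤ 3 := by
    rw [abs_of_nonneg (by positivity)]
    rw [hgdef, div_le_iff₀ h1τ]
    linarith
  -- uniform convergence of γ n · to glim
  have huc : ∀ ε > (0 : ℝ), ∃ N, ∀ n ≥ N, ∀ m, |γ n m - glim m| < ε := by
    intro ε hε
    obtain ⟨N1, hN1⟩ := Metric.tendsto_atTop.mp hL (ε / 2) (by linarith)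
    obtain ⟨N2, hN2⟩ := hτu (ε / 12) (by linarith)
    refine ⟨max N1 N2, fun n hn => ?_⟩
    have hn1 : n ≥ N1 := le_trans (le_max_left _ _) hn
    have hn2 : n ≥ N2 := le_trans (le_max_right _ _) hn
    have key : ∀ m, |γ n m - glim m| < 11 * ε / 12 := by
      intro m
      induction m with
      | zero =>
        have h0 := hN1 n hn1
        rw [Real.dist_eq] at h0
        rw [hg0]
        linarith
      | succ m ih =>
        have hd : γ n (m + 1) - glim (m + 1) =
            τ n (m + 1) * (γ n m - glim m) + (τ n (m + 1) - τlim (m + 1)) * glim m := by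
          rw [hrec n m, hgs m]; ring
        have h1 : |τ n (m + 1) * (γ n m - glim m)| ≤ 9 / 50 * (11 * ε / 12) := by
          rw [abs_mul, abs_of_nonneg (hτpos n (m + 1)).le]
          exact mul_le_mul (hτlt n (m + 1)).le ih.le (abs_nonneg _) (by norm_num)
        have h2 : |(τ n (m + 1) - τlim (m + 1)) * glim m| ≤ ε / 12 * 4 := by
          rw [abs_mul]
          exact mul_le_mul (hN2 n hn2 (m + 1)).le (hgb m) (abs_nonneg _) (by linarith)
        calc |γ n (m + 1) - glim (m + 1)|
            ≤ |τ n (m + 1) * (γ n m - glim m)| + |(τ n (m + 1) - τlim (m + 1)) * glim m| := by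
              rw [hd]; exact abs_add_le _ _
          _ < 11 * ε / 12 := by linarith
    intro m
    linarith [key m]
  -- tail convergence of glim to g
  have htail : Tendsto glim atTop (nhds g) := by
    rw [Metric.tendsto_atTop]
    intro ε hε
    obtain ⟨M, hM⟩ := Metric.tendsto_atTop.mp hτInf (ε / 10) (by linarith)
    have hpow : Tendsto (fun k : ℕ => (9 / 50 : ℝ) ^ k) atTop (nhds 0) :=
      tendsto_pow_atTop_nhds_zero_of_lt_one (by norm_num) (by norm_num)
    obtain ⟨K, hK⟩ := eventually_atTop.mp
      (hpow.eventually (gt_mem_nhds (show (0 : ℝ) < ε / 14 by linarith)))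
    have key : ∀ k, |glim (M + k) - g| ≤ 7 * (9 / 50 : ℝ) ^ k + ε / 2 := by
      intro k
      induction k with
      | zero =>
        have ha := abs_le.mp (hgb (M + 0))
        have hb := abs_le.mp hgb3
        rw [pow_zero]
        rw [abs_le]
        constructor <;> linarith
      | succ k ih =>
        have hstep : glim (M + k + 1) - g =
            τlim (M + k + 1) * (glim (M + k) - g) + (τlim (M + k + 1) - τInf) * g := by
          rw [hgs (M + k)]
          linear_combination -hgfix
        have h1 : |τlim (M + k + 1) * (glim (M + k) - g)| ≤
            9 / 50 * (7 * (9 / 50 : ℝ) ^ k + ε / 2) := by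
          rw [abs_mul, abs_of_nonneg (hτlim0 (M + k + 1))]
          refine mul_le_mul (hτlim1 _) ih (abs_nonneg _) (by norm_num)
        have hMk : dist (τlim (M + k + 1)) τInf < ε / 10 := hM (M + k + 1) (by omega)
        rw [Real.dist_eq] at hMk
        have h2 : |(τlim (M + k + 1) - τInf) * g| ≤ ε / 10 * 3 := by
          rw [abs_mul]
          exact mul_le_mul hMk.le hgb3 (abs_nonneg _) (by linarith)
        have hAddSucc : M + (k + 1) = M + k + 1 := rfl
        rw [hAddSucc]
        calc |glim (M + k + 1) - g|
            ≤ |τlim (M + k + 1) * (glim (M + k) - g)| + |(τlim (M + k + 1) - τInf) * g| := by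
              rw [hstep]; exact abs_add_le _ _
          _ ≤ 7 * (9 / 50 : ℝ) ^ (k + 1) + ε / 2 := by
              rw [pow_succ]
              nlinarith [pow_nonneg (show (0:ℝ) ≤ 9/50 by norm_num) k]
    refine ⟨M + K, fun m hm => ?_⟩
    obtain ⟨k, rfl⟩ := Nat.exists_eq_add_of_le (show M ≤ m by omega)
    have hk : k ≥ K := by omega
    rw [Real.dist_eq]
    have := key k
    have := hK k hk
    linarith
  -- diagonal convergence
  have hdiag : Tendsto (fun n => γ n n) atTop (nhds g) := by
    rw [Metric.tendsto_atTop]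
    intro ε hε
    obtain ⟨N1, hN1⟩ := huc (ε / 2) (by linarith)
    obtain ⟨N2, hN2⟩ := Metric.tendsto_atTop.mp htail (ε / 2) (by linarith)
    refine ⟨max N1 N2, fun n hn => ?_⟩
    have h1 := hN1 n (le_trans (le_max_left _ _) hn) n
    have h2 := hN2 n (le_trans (le_max_right _ _) hn)
    rw [Real.dist_eq] at *
    calc |γ n n - g| ≤ |γ n n - glim n| + |glim n - g| := abs_sub_le _ _ _
      _ < ε := by linarith
  exact ⟨glim, huc, htail, hdiag⟩
end
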